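/- Let ι : B → A be an injective group homomorphism and q, q' : A → B two descent 1-cocycles. If Ker(q') = ι(b₀)⁻¹·Ker(q)·ι(b₀) for some b₀ ∈ B, then q(a)·b₀ = q'(a·ι(b₀)) for all a ∈ A. Hence two descent 1-cocycles are equivalent (via some b₀ ∈ B) if and only if their kernels are conjugate in A by an element of ι(B). -/

import Mathlib

/-- if `Ker q' = (ι b₀)⁻¹ · Ker q · ι b₀` then `q a * b₀ = q' (a * ι b₀)`
for all `a`; hence two descent 1-cocycles are equivalent iff their kernels are conjugate
in `A` by an element of `ι(B)`. -/
theorem stmt13 {B A : Type*} [Group B] [Group A] (ι : B →* A)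
    (hι : Function.Injective ι) (q q' : A → B)
    (hq1 : q 1 = 1) (hq2 : ∀ (b : B) (a : A), q (ι b * a) = b * q a)
    (hq3 : ∀ a a' : A, q (a * a') = q (a * ι (q a')))
    (hq'1 : q' 1 = 1) (hq'2 : ∀ (b : B) (a : A), q' (ι b * a) = b * q' a)
    (hq'3 : ∀ a a' : A, q' (a * a') = q' (a * ι (q' a'))) :
    (∀ b₀ : B,
      {a : A | q' a = 1} = (fun c : A => (ι b₀)⁻¹ * c * ι b₀) '' {a : A | q a = 1} →
      ∀ a : A, q a * b₀ = q' (a * ι b₀)) ∧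
    ((∃ b₀ : B, ∀ a : A, q a * b₀ = q' (a * ι b₀)) ↔
      (∃ b₀ : B,
        {a : A | q a = 1} = (fun c : A => ι b₀ * c * (ι b₀)⁻¹) '' {a : A | q' a = 1})) := by
  -- `ι (q a)⁻¹ * a` lies in the kernel of `q`
  have hker : ∀ a : A, q (ι ((q a)⁻¹) * a) = 1 := fun a => by
    rw [hq2]; group
  -- `q` is determined by its kernel
  have huniq : ∀ (a : A) (b : B), q (ι (b⁻¹) * a) = 1 → q a = b := fun a b h => by
    have : q (ι b * (ι (b⁻¹) * a)) = b * q (ι (b⁻¹) * a) := hq2 b _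
    rw [h, mul_one] at this
    rw [← this]
    congr 1
    rw [← mul_assoc, ← map_mul]
    simp
  have huniq' : ∀ (a : A) (b : B), q' (ι (b⁻¹) * a) = 1 → q' a = b := fun a b h => by
    have : q' (ι b * (ι (b⁻¹) * a)) = b * q' (ι (b⁻¹) * a) := hq'2 b _
    rw [h, mul_one] at this
    rw [← this]
    congr 1
    rw [← mul_assoc, ← map_mul]
    simp
  have main : ∀ b₀ : B,
      {a : A | q' a = 1} = (fun c : A => (ι b₀)⁻¹ * c * ι b₀) '' {a : A | q a = 1} →
      ∀ a : A, q a * b₀ = q' (a * ι b₀) := by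
    intro b₀ hK a
    refine (huniq' (a * ι b₀) (q a * b₀) ?_).symm
    have : ι ((q a * b₀)⁻¹) * (a * ι b₀) =
        (ι b₀)⁻¹ * (ι ((q a)⁻¹) * a) * ι b₀ := by
      simp [mul_inv_rev, map_mul, map_inv]
      group
    rw [this]
    have : (ι b₀)⁻¹ * (ι ((q a)⁻¹) * a) * ι b₀ ∈
        (fun c : A => (ι b₀)⁻¹ * c * ι b₀) '' {a : A | q a = 1} :=
      ⟨ι ((q a)⁻¹) * a, hker a, rfl⟩
    rw [← hK] at this
    exact this
  refine ⟨main, ⟨?_, ?_⟩⟩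
  · rintro ⟨b₀, hb⟩
    refine ⟨b₀, ?_⟩
    ext a
    constructor
    · intro (ha : q a = 1)
      refine ⟨(ι b₀)⁻¹ * a * ι b₀, ?_, by group⟩
      show q' _ = 1
      have h1 : q' (a * ι b₀) = b₀ := by rw [← hb, ha, one_mul]
      have : q' (ι (b₀⁻¹) * (a * ι b₀)) = b₀⁻¹ * q' (a * ι b₀) := hq'2 _ _
      rw [h1] at this
      simpa [mul_assoc] using this
    · rintro ⟨x, (hx : q' x = 1), rfl⟩
      show q (ι b₀ * x * (ι b₀)⁻¹) = 1
      have h1 : q (ι b₀ * x * (ι b₀)⁻¹) * b₀ = q' (ι b₀ * x * (ι b₀)⁻¹ * ι b₀) := hb _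
      have h2 : q' (ι b₀ * x * (ι b₀)⁻¹ * ι b₀) = q' (ι b₀ * x) := by group
      rw [h2, hq'2, hx, mul_one] at h1
      exact mul_eq_right.mp h1
  · rintro ⟨b₀, hK⟩
    refine ⟨b₀, main b₀ ?_⟩
    ext a
    constructor
    · intro (ha : q' a = 1)
      refine ⟨ι b₀ * a * (ι b₀)⁻¹, ?_, by group⟩
      show q _ = 1
      have : ι b₀ * a * (ι b₀)⁻¹ ∈ (fun c : A => ι b₀ * c * (ι b₀)⁻¹) '' {a : A | q' a = 1} :=
        ⟨a, ha, rfl⟩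
      rw [← hK] at this
      exact this
    · rintro ⟨x, (hx : q x = 1), rfl⟩
      have : x ∈ (fun c : A => ι b₀ * c * (ι b₀)⁻¹) '' {a : A | q' a = 1} := hK ▸ hx
      obtain ⟨y, (hy : q' y = 1), rfl⟩ := this
      show q' ((ι b₀)⁻¹ * (ι b₀ * y * (ι b₀)⁻¹) * ι b₀) = 1
      have h : (ι b₀)⁻¹ * (ι b₀ * y * (ι b₀)⁻¹) * ι b₀ = y := by group
      rw [h, hy]
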